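/- Let T₁,...,T_d be commuting contractions on H with T = T₁⋯T_d, and suppose for some index j there exist bounded operators F_{j1}, F_{j2} on 𝒟_T satisfying D_T T_j = F_{j1} D_T + F_{j2}* D_T T and D_T T_{(j)} = F_{j2} D_T + F_{j1}* D_T T, where T_{(j)} = ∏_{i≠j} T_i. Then such a pair (F_{j1}, F_{j2}) is unique: if (F'_{j1}, F'_{j2}) also satisfies both equations, then F_{j1} = F'_{j1} and F_{j2} = F'_{j2}. -/

import Mathlib

open ContinuousLinearMap

open scoped InnerProductSpace

/-- The closure of the range of an operator, as a submodule. -/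
noncomputable def ranClosure {H : Type*} [NormedAddCommGroup H] [InnerProductSpace ℂ H]
    (D : H →L[ℂ] H) : Submodule ℂ H :=
  (LinearMap.range (D : H →ₗ[ℂ] H)).topologicalClosure

theorem mem_ranClosure {H : Type*} [NormedAddCommGroup H] [InnerProductSpace ℂ H]
    (D : H →L[ℂ] H) (h : H) : D h ∈ ranClosure D :=
  Submodule.le_topologicalClosure _ ⟨h, rfl⟩

instance {H : Type*} [NormedAddCommGroup H] [InnerProductSpace ℂ H] [CompleteSpace H]
    (D : H →L[ℂ] H) : CompleteSpace (ranClosure D) :=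
  (Submodule.isClosed_topologicalClosure _).completeSpace_coe

set_option maxHeartbeats 1600000 in
/-- Uniqueness of fundamental operators: if `T 0, …, T (d-1)` are commuting contractions
with product `P = T 0 ⋯ T (d-1)`, defect operator `D = D_P` (regarded, via `Dmap`, as a
map into `𝒟_P = closure(Ran D_P)`), `j` an index, `T_{(j)}` the product omitting `T j`,
and if the pairs `(F1, F2)` and `(F1', F2')` of bounded operators on `𝒟_P` both satisfy
`D_P T_j = F_{j1} D_P + F_{j2}* D_P P` and `D_P T_{(j)} = F_{j2} D_P + F_{j1}* D_P P`,
then `F1 = F1'` and `F2 = F2'`. -/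
theorem stmt16 {H : Type*} [NormedAddCommGroup H] [InnerProductSpace ℂ H] [CompleteSpace H]
    (d : ℕ) (hd : 1 ≤ d) (T : Fin d → H →L[ℂ] H)
    (hT : ∀ i, ‖T i‖ ≤ 1) (hcomm : ∀ i j, Commute (T i) (T j)) (j : Fin d)
    (D : H →L[ℂ] H) (hDpos : D.IsPositive)
    (hD2 : D * D = 1 - adjoint ((List.ofFn T).prod) * (List.ofFn T).prod)
    (Dmap : H →L[ℂ] ranClosure D) (hDmap : ∀ h : H, (Dmap h : H) = D h)
    (F1 F2 F1' F2' : ranClosure D →L[ℂ] ranClosure D)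
    (hF : ∀ h : H,
      Dmap ((T j) h) = F1 (Dmap h) + adjoint F2 (Dmap (((List.ofFn T).prod) h)) ∧
      Dmap ((((List.ofFn T).eraseIdx (j : ℕ)).prod) h) =
        F2 (Dmap h) + adjoint F1 (Dmap (((List.ofFn T).prod) h)))
    (hF' : ∀ h : H,
      Dmap ((T j) h) = F1' (Dmap h) + adjoint F2' (Dmap (((List.ofFn T).prod) h)) ∧
      Dmap ((((List.ofFn T).eraseIdx (j : ℕ)).prod) h) =
        F2' (Dmap h) + adjoint F1' (Dmap (((List.ofFn T).prod) h))) :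
    F1 = F1' ∧ F2 = F2' := by
  set P : H →L[ℂ] H := (List.ofFn T).prod with hP
  -- norm identity ‖D x‖² = ‖x‖² - ‖P x‖²
  have hsa : IsSelfAdjoint D := hDpos.isSelfAdjoint
  have hnormsq : ∀ x : H, ‖D x‖ ^ 2 = ‖x‖ ^ 2 - ‖P x‖ ^ 2 := by
    intro x
    have h1 : (⟪D x, D x⟫_ℂ) = ⟪x, (D * D) x⟫_ℂ := by
      rw [mul_apply_eq_comp]
      conv_rhs => rw [← adjoint_inner_left]
      rw [hsa.adjoint_eq]
    rw [hD2] at h1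
    have h2 : (⟪x, (1 - adjoint P * P) x⟫_ℂ) = ⟪x, x⟫_ℂ - ⟪P x, P x⟫_ℂ := by
      simp [inner_sub_right, mul_apply, adjoint_inner_right]
    rw [h2] at h1
    have h3 := congrArg RCLike.re h1
    simpa [map_sub, inner_self_eq_norm_sq, ← Complex.ofReal_pow, Complex.ofReal_re] using h3
  -- the key limit
  have hlim : ∀ h : H, Filter.Tendsto (fun n => ‖D ((P ^ n) h)‖) Filter.atTop (nhds 0) := by
    intro h
    set f : ℕ → ℝ := fun n => ‖(P ^ n) h‖ ^ 2 with hf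
    have hdiff : ∀ n, ‖D ((P ^ n) h)‖ ^ 2 = f n - f (n + 1) := by
      intro n
      rw [hnormsq ((P ^ n) h)]
      congr 2
      simp [hf, pow_succ', mul_apply]
    have hanti : Antitone f := antitone_nat_of_succ_le (by
      intro n
      have h1 := hdiff n
      nlinarith [sq_nonneg ‖D ((P ^ n) h)‖])
    have hbdd : BddBelow (Set.range f) := ⟨0, by rintro _ ⟨n, rfl⟩; positivity⟩
    have htend : Filter.Tendsto f Filter.atTop (nhds (⨅ n, f n)) :=
      tendsto_atTop_ciInf hanti hbdd
    have htend2 : Filter.Tendsto (fun n => f (n + 1)) Filter.atTop (nhds (⨅ n, f n)) :=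
      htend.comp (Filter.tendsto_add_atTop_nat 1)
    have hsq : Filter.Tendsto (fun n => ‖D ((P ^ n) h)‖ ^ 2) Filter.atTop (nhds 0) := by
      have := htend.sub htend2
      rw [sub_self] at this
      exact this.congr (fun n => (hdiff n).symm)
    have := (Real.continuous_sqrt.tendsto' 0 0 Real.sqrt_zero).comp hsq
    simpa [Real.sqrt_sq (norm_nonneg _), Function.comp_def] using this
  -- density of the range of Dmap
  have hdense : Dense (Set.range Dmap) := by
    intro x
    rw [closure_subtype]
    have himg : (Subtype.val '' Set.range Dmap) = Set.range D := by
      ext y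
      constructor
      · rintro ⟨_, ⟨h, rfl⟩, rfl⟩; exact ⟨h, (hDmap h).symm⟩
      · rintro ⟨h, rfl⟩; exact ⟨Dmap h, ⟨h, rfl⟩, hDmap h⟩
    rw [himg]
    exact x.2
  -- key abstract lemma
  have key : ∀ (G G' : ranClosure D →L[ℂ] ranClosure D),
      (∀ h : H, G (Dmap h) = - adjoint G' (Dmap (P h))) →
      (∀ h : H, G' (Dmap h) = - adjoint G (Dmap (P h))) → G = 0 := by
    intro G G' hG hG'
    have step : ∀ h h' : H, ⟪G (Dmap h), Dmap h'⟫_ℂ = ⟪G (Dmap (P h)), Dmap (P h')⟫_ℂ := by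
      intro h h'
      rw [hG h, inner_neg_left, adjoint_inner_left, hG' h', inner_neg_right, adjoint_inner_right,
        neg_neg]
    have iter : ∀ n (h h' : H),
        ⟪G (Dmap h), Dmap h'⟫_ℂ = ⟪G (Dmap ((P ^ n) h)), Dmap ((P ^ n) h')⟫_ℂ := by
      intro n
      induction n with
      | zero => intro h h'; simp
      | succ n ih =>
        intro h h'
        rw [step h h', ih (P h) (P h')]
        simp [pow_succ, mul_apply]
    have limz : ∀ h h' : H, ⟪G (Dmap h), Dmap h'⟫_ℂ = 0 := by
      intro h h'
      have hb : ∀ n, ‖⟪G (Dmap h), Dmap h'⟫_ℂ‖ ≤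
          ‖G‖ * ‖D ((P ^ n) h)‖ * ‖D ((P ^ n) h')‖ := by
        intro n
        rw [iter n h h']
        calc ‖⟪G (Dmap ((P ^ n) h)), Dmap ((P ^ n) h')⟫_ℂ‖
            ≤ ‖G (Dmap ((P ^ n) h))‖ * ‖Dmap ((P ^ n) h')‖ := norm_inner_le_norm _ _
          _ ≤ (‖G‖ * ‖Dmap ((P ^ n) h)‖) * ‖Dmap ((P ^ n) h')‖ := by
              gcongr; exact le_opNorm G _
          _ = ‖G‖ * ‖D ((P ^ n) h)‖ * ‖D ((P ^ n) h')‖ := by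
              have e1 : ‖Dmap ((P ^ n) h)‖ = ‖D ((P ^ n) h)‖ := by
                rw [← hDmap, Submodule.norm_coe]
              have e2 : ‖Dmap ((P ^ n) h')‖ = ‖D ((P ^ n) h')‖ := by
                rw [← hDmap, Submodule.norm_coe]
              rw [e1, e2]
      have htend : Filter.Tendsto (fun n => ‖G‖ * ‖D ((P ^ n) h)‖ * ‖D ((P ^ n) h')‖)
          Filter.atTop (nhds 0) := by
        have := ((hlim h).const_mul ‖G‖).mul (hlim h')
        simpa using this
      have hle : ‖⟪G (Dmap h), Dmap h'⟫_ℂ‖ ≤ 0 :=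
        ge_of_tendsto htend (Filter.Eventually.of_forall hb)
      have : ‖⟪G (Dmap h), Dmap h'⟫_ℂ‖ = 0 := le_antisymm hle (norm_nonneg _)
      exact norm_eq_zero.mp this
    have hz : ∀ h : H, G (Dmap h) = 0 := by
      intro h
      have hcont : Continuous fun y : ranClosure D => ⟪G (Dmap h), y⟫_ℂ :=
        Continuous.inner continuous_const continuous_id
      have hfun : (fun y : ranClosure D => ⟪G (Dmap h), y⟫_ℂ) = fun _ => (0 : ℂ) := by
        apply Continuous.ext_on hdense hcont continuous_const
        rintro _ ⟨h', rfl⟩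
        exact limz h h'
      have := congrFun hfun (G (Dmap h))
      simpa [inner_self_eq_zero] using this
    have hfun : (⇑G : ranClosure D → ranClosure D) = ⇑(0 : ranClosure D →L[ℂ] ranClosure D) := by
      apply Continuous.ext_on hdense G.continuous continuous_const
      rintro _ ⟨h, rfl⟩
      exact hz h
    ext x
    exact congrArg Subtype.val (congrFun hfun x)
  -- derive the hypotheses of key
  have hG1 : ∀ h : H, (F1 - F1') (Dmap h) = - adjoint (F2 - F2') (Dmap (P h)) := by
    intro h
    have e1 := (hF h).1
    have e2 := (hF' h).1
    have : F1 (Dmap h) + adjoint F2 (Dmap (P h)) = F1' (Dmap h) + adjoint F2' (Dmap (P h)) := by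
      rw [← e1, ← e2]
    have hadj : adjoint (F2 - F2') = adjoint F2 - adjoint F2' := by
      rw [map_sub]
    have h3 : F1 (Dmap h) - F1' (Dmap h)
        = adjoint F2' (Dmap (P h)) - adjoint F2 (Dmap (P h)) := by
      rw [sub_eq_sub_iff_add_eq_add]
      exact this.trans (add_comm _ _)
    rw [ContinuousLinearMap.sub_apply, hadj, ContinuousLinearMap.sub_apply, neg_sub]
    exact h3
  have hG2 : ∀ h : H, (F2 - F2') (Dmap h) = - adjoint (F1 - F1') (Dmap (P h)) := by
    intro h
    have e1 := (hF h).2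
    have e2 := (hF' h).2
    have : F2 (Dmap h) + adjoint F1 (Dmap (P h)) = F2' (Dmap h) + adjoint F1' (Dmap (P h)) := by
      rw [← e1, ← e2]
    have hadj : adjoint (F1 - F1') = adjoint F1 - adjoint F1' := by
      rw [map_sub]
    have h3 : F2 (Dmap h) - F2' (Dmap h)
        = adjoint F1' (Dmap (P h)) - adjoint F1 (Dmap (P h)) := by
      rw [sub_eq_sub_iff_add_eq_add]
      exact this.trans (add_comm _ _)
    rw [ContinuousLinearMap.sub_apply, hadj, ContinuousLinearMap.sub_apply, neg_sub]
    exact h3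
  constructor
  · exact sub_eq_zero.mp (key (F1 - F1') (F2 - F2') hG1 hG2)
  · exact sub_eq_zero.mp (key (F2 - F2') (F1 - F1') hG2 hG1)
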